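/- Let R be a commutative ring in which 1 + 1 = 0, and let A, H be R-modules. Let d : A × A × H → A × A × H be an R-linear endomorphism given in block form by d(a,b,h) = (f a + g₁ b + m h, u a + g b + n h, p a + q b + l h), with all blocks R-linear and u : A → A invertible. If d ∘ d = 0, then the conjugated endomorphism d̃ = S ∘ d ∘ S⁻¹, where S(a,b,h) = (u a + (u ∘ f ∘ u⁻¹) b, b, h) and S⁻¹(a,b,h) = (u⁻¹ a + (f ∘ u⁻¹) b, b, h), has block form d̃(a,b,h) = (m'∘A₀ b + m' h, a + (n ∘ A₀) b + n h, A₀ a + (l ∘ A₀) b + l h) with vanishing (1,1)-block, where A₀ = p ∘ u⁻¹ : A → H and m' = u ∘ m + u ∘ f ∘ u⁻¹ ∘ n : H → A. -/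
import Mathlib


/-- The first base change in the proof of Lemma 3.1 of the paper (characteristic 2):
conjugating the square-zero differential `d(a,b,h) = (f a + g₁ b + m h, u a + g b + n h,
p a + q b + l h)` (with `u` invertible) by `S(a,b,h) = (u a + (u∘f∘u⁻¹) b, b, h)`,
with inverse `S⁻¹(a,b,h) = (u⁻¹ a + (f∘u⁻¹) b, b, h)`, yields the block form
`[[0, m'∘A₀, m'], [I, n∘A₀, n], [A₀, l∘A₀, l]]` where `A₀ = p ∘ u⁻¹` and
`m' = u∘m + u∘f∘u⁻¹∘n`. -/
theorem stmt8 {R : Type*} [CommRing R] (hchar : (1 : R) + 1 = 0)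
    {A H : Type*} [AddCommGroup A] [AddCommGroup H] [Module R A] [Module R H]
    (f g₁ g : A →ₗ[R] A) (m n : H →ₗ[R] A) (u : A →ₗ[R] A)
    (p q : A →ₗ[R] H) (l : H →ₗ[R] H)
    (e : A ≃ₗ[R] A) (hu : (e : A →ₗ[R] A) = u)
    (d : (A × A × H) →ₗ[R] (A × A × H))
    (hd : ∀ a b h, d (a, b, h) = (f a + g₁ b + m h, u a + g b + n h, p a + q b + l h))
    (hdd : d.comp d = 0)
    (S T : (A × A × H) →ₗ[R] (A × A × H))
    (hS : ∀ a b h, S (a, b, h) = (u a + u (f (e.symm b)), b, h))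
    (hT : ∀ a b h, T (a, b, h) = (e.symm a + f (e.symm b), b, h)) :
    ∀ a b h, (S.comp (d.comp T)) (a, b, h) =
      ((u (m (p (e.symm b))) + u (f (e.symm (n (p (e.symm b)))))) +
          (u (m h) + u (f (e.symm (n h)))),
        a + n (p (e.symm b)) + n h,
        p (e.symm a) + l (p (e.symm b)) + l h) := by
  have twoA : ∀ v : A, v + v = 0 := by
    intro v
    have h : ((1:R)+1) • v = v + v := by rw [add_smul, one_smul]
    rw [← h, hchar, zero_smul]
  have twoH : ∀ v : H, v + v = 0 := by
    intro v
    have h : ((1:R)+1) • v = v + v := by rw [add_smul, one_smul]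
    rw [← h, hchar, zero_smul]
  have cancelA : ∀ x y : A, x + y = 0 → x = y := fun x y hxy =>
    (eq_neg_of_add_eq_zero_left hxy).trans (neg_eq_of_add_eq_zero_left (twoA y))
  have cancelH : ∀ x y : H, x + y = 0 → x = y := fun x y hxy =>
    (eq_neg_of_add_eq_zero_left hxy).trans (neg_eq_of_add_eq_zero_left (twoH y))
  have ue : ∀ x : A, u (e.symm x) = x := by
    intro x; rw [← hu]; exact e.apply_symm_apply x
  have eu : ∀ x : A, e.symm (u x) = x := by
    intro x; rw [← hu]; exact e.symm_apply_apply x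
  have rel : ∀ x : A, f (f x) + g₁ (u x) + m (p x) = 0 ∧
      u (f x) + g (u x) + n (p x) = 0 ∧ p (f x) + q (u x) + l (p x) = 0 := by
    intro x
    have h0 := LinearMap.congr_fun hdd (x, 0, 0)
    rw [LinearMap.comp_apply, LinearMap.zero_apply, hd, hd] at h0
    simp only [map_zero, add_zero, Prod.ext_iff, Prod.fst_zero, Prod.snd_zero] at h0
    exact ⟨h0.1, h0.2.1, h0.2.2⟩
  intro a b h
  set b' := e.symm b with hb'
  have hub' : u b' = b := ue b
  have rel2' : ∀ y : A, e.symm (g y) = f (e.symm y) + e.symm (n (p (e.symm y))) := by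
    intro y
    have h2 := (rel (e.symm y)).2.1
    rw [ue] at h2
    have h2' := congrArg e.symm h2
    simp only [map_add, map_zero, eu] at h2'
    refine cancelA _ _ ?_
    rw [← h2']; abel
  have hg₁ : g₁ b = f (f b') + m (p b') := by
    have h1 := (rel b').1
    rw [hub'] at h1
    refine cancelA _ _ ?_
    rw [← h1]; abel
  have huf : u (f b') = g b + n (p b') := by
    have h2 := (rel b').2.1
    rw [hub'] at h2
    refine cancelA _ _ ?_
    rw [← h2]; abel
  have hpf : p (f b') = q b + l (p b') := by
    have h3 := (rel b').2.2
    rw [hub'] at h3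
    refine cancelH _ _ ?_
    rw [← h3]; abel
  simp only [LinearMap.comp_apply, hT, hd, hS]
  refine Prod.ext ?_ (Prod.ext ?_ ?_)
  · simp only [map_add, eu, rel2', ← hb', hg₁, huf]
    abel_nf
    simp only [show (4:ℤ)=2*2 from rfl, show (3:ℤ)=2+1 from rfl, mul_zsmul, add_zsmul,
      one_zsmul, two_zsmul, twoA, smul_zero, zero_add, add_zero]
  · simp only [map_add, ue, eu, huf, ← hb']
    abel_nf
    simp only [two_zsmul, twoA, zero_add, add_zero]
  · simp only [map_add, hpf, ← hb']
    abel_nf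
    simp only [two_zsmul, twoH, zero_add, add_zero]
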